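/- Let (B, A, ψ) be a quantum graph with B = ⊕_{a=1}^d M_{n_a} and ψ = ⊕_a Tr(ρ_a ·) a δ-form with each ρ_a diagonal. For fixed b, write A(f_{ij}^b) = ⊕_{a=1}^d X_{ij}^{ab} with X_{ij}^{ab} ∈ M_{n_a}, and set X^{ab} = [X_{ij}^{ab}]_{1≤i,j≤n_b} ∈ M_{n_b}(M_{n_a}). Then (1/δ²) X^{ab} is a self-adjoint idempotent (projection) in M_{n_b}(B): namely X_{ij}^{ab} = (X_{ji}^{ab})* and δ² X_{ij}^{ab} = Σ_{k=1}^{n_b} X_{ik}^{ab} X_{kj}^{ab}. -/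

import Mathlib

open scoped TensorProduct ComplexOrder
open Matrix

/-- The multimatrix algebra `B = ⊕_{a=1}^d M_{n_a}` over `ℂ`. -/
abbrev MB (d : ℕ) (n : Fin d → ℕ) := ∀ a : Fin d, Matrix (Fin (n a)) (Fin (n a)) ℂ

/-- The state `ψ = ⊕_a Tr(ρ_a ·)` as a linear functional. -/
noncomputable def psiL {d : ℕ} {n : Fin d → ℕ} (ρ : MB d n) : MB d n →ₗ[ℂ] ℂ where
  toFun X := ∑ a, (ρ a * X a).trace
  map_add' x y := by simp [mul_add, Finset.sum_add_distrib]
  map_smul' c x := by simp [Finset.mul_sum, mul_smul_comm]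

/-- The GNS inner product on `B ⊗ B` paired against the pure tensor `x ⊗ y` in the first
(conjugated) slot. -/
noncomputable def pairL {d : ℕ} {n : Fin d → ℕ} (ρ : MB d n) (x y : MB d n) :
    (MB d n ⊗[ℂ] MB d n) →ₗ[ℂ] ℂ :=
  TensorProduct.lift
    (LinearMap.mk₂ ℂ (fun c e => psiL ρ (star x * c) * psiL ρ (star y * e))
      (fun c c' e => by simp [mul_add, map_add, add_mul])
      (fun s c e => by simp [mul_smul_comm, _root_.map_smul, smul_eq_mul]; ring)
      (fun c e e' => by simp [mul_add, map_add])
      (fun s c e => by simp [mul_smul_comm, _root_.map_smul, smul_eq_mul]; ring))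

/-- The normalized matrix units `f_{ij}^b = e_{ij}^b/(ψ(e_ii^b)^{1/2} ψ(e_jj^b)^{1/2})`
of the `b`-th block, where `ρ_b = diag(c b ·)`. -/
noncomputable def fB {d : ℕ} {n : Fin d → ℕ} (c : ∀ a, Fin (n a) → ℝ)
    (b : Fin d) (i j : Fin (n b)) : MB d n :=
  Pi.single b (((1 / (Real.sqrt (c b i) * Real.sqrt (c b j)) : ℝ) : ℂ) •
    single i j 1)

section Aux
variable {d : ℕ} {n : Fin d → ℕ}

/-- unnormalized matrix units -/
noncomputable def EB (b : Fin d) (i j : Fin (n b)) : MB d n :=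
  Pi.single b (single i j 1)

lemma fB_eq (c : ∀ a, Fin (n a) → ℝ) (b : Fin d) (i j : Fin (n b)) :
    fB c b i j = (((1 / (Real.sqrt (c b i) * Real.sqrt (c b j)) : ℝ) : ℂ)) • EB b i j := by
  rw [fB, EB, ← Pi.single_smul, smul_single, smul_eq_mul, mul_one]

lemma psi_star_E (c : ∀ a, Fin (n a) → ℝ) (ρ : MB d n)
    (hρ : ∀ a, ρ a = Matrix.diagonal (fun k => (c a k : ℂ)))
    (z : MB d n) (b : Fin d) (i j : Fin (n b)) :
    psiL ρ (star z * EB b i j) = (c b j : ℂ) * (starRingEnd ℂ) (z b i j) := by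
  simp only [psiL, LinearMap.coe_mk, AddHom.coe_mk]
  rw [Finset.sum_eq_single b]
  · rw [hρ b]
    simp only [EB, Pi.mul_apply, Pi.star_apply, Pi.single_eq_same,
      Matrix.star_eq_conjTranspose]
    rw [← Matrix.mul_assoc, Matrix.trace_mul_cycle]
    simp [Matrix.trace, Matrix.diag, Matrix.mul_apply, Matrix.single,
      Matrix.diagonal, Matrix.conjTranspose_apply, ite_and, mul_comm]
  · intro a _ ha
    simp [EB, Pi.single_eq_of_ne ha]
  · intro h; exact absurd (Finset.mem_univ b) h

lemma pairL_tmul (ρ : MB d n) (x y u v : MB d n) :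
    pairL ρ x y (u ⊗ₜ[ℂ] v) = psiL ρ (star x * u) * psiL ρ (star y * v) := by
  simp [pairL]

end Aux

section Aux2
variable {d : ℕ} {n : Fin d → ℕ}

lemma psi_star_f (c : ∀ a, Fin (n a) → ℝ) (ρ : MB d n)
    (hρ : ∀ a, ρ a = Matrix.diagonal (fun k => (c a k : ℂ)))
    (z : MB d n) (b : Fin d) (i j : Fin (n b)) :
    psiL ρ (star z * fB c b i j) =
      ((c b j / (Real.sqrt (c b i) * Real.sqrt (c b j)) : ℝ) : ℂ) *
        (starRingEnd ℂ) (z b i j) := by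
  rw [fB_eq, mul_smul_comm, _root_.map_smul, psi_star_E c ρ hρ]
  rw [smul_eq_mul]
  push_cast
  ring

lemma Kmul (c : ∀ a, Fin (n a) → ℝ) (hc : ∀ a k, 0 < c a k) (b : Fin d)
    (i k j : Fin (n b)) :
    ((c b k / (Real.sqrt (c b i) * Real.sqrt (c b k)) : ℝ) : ℂ) *
      ((c b j / (Real.sqrt (c b k) * Real.sqrt (c b j)) : ℝ) : ℂ) =
      ((c b j / (Real.sqrt (c b i) * Real.sqrt (c b j)) : ℝ) : ℂ) := by
  have hk : Real.sqrt (c b k) * Real.sqrt (c b k) = c b k :=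
    Real.mul_self_sqrt (hc b k).le
  have : (c b k / (Real.sqrt (c b i) * Real.sqrt (c b k))) *
      (c b j / (Real.sqrt (c b k) * Real.sqrt (c b j))) =
      (c b j / (Real.sqrt (c b i) * Real.sqrt (c b j))) *
        (c b k / (Real.sqrt (c b k) * Real.sqrt (c b k))) := by ring
  rw [← Complex.ofReal_mul, this, hk, div_self (ne_of_gt (hc b k)), mul_one]

lemma pair_identity (c : ∀ a, Fin (n a) → ℝ) (hc : ∀ a k, 0 < c a k) (ρ : MB d n)
    (hρ : ∀ a, ρ a = Matrix.diagonal (fun k => ((c a k : ℝ) : ℂ)))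
    (x y : MB d n) (b : Fin d) (i j : Fin (n b)) :
    psiL ρ (star (x * y) * fB c b i j) =
      ∑ k, psiL ρ (star x * fB c b i k) * psiL ρ (star y * fB c b k j) := by
  simp only [psi_star_f c ρ hρ]
  have hxy : (x * y) b i j = ∑ k, x b i k * y b k j := by
    rw [Pi.mul_apply, Matrix.mul_apply]
  rw [hxy, map_sum, Finset.mul_sum]
  refine Finset.sum_congr rfl fun k _ => ?_
  rw [← Kmul c hc b i k j]
  simp only [_root_.map_mul]
  ring

end Aux2

section Aux3
variable {d : ℕ} {n : Fin d → ℕ}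

noncomputable def bMB (d : ℕ) (n : Fin d → ℕ) :
    Module.Basis (Σ a : Fin d, Fin (n a) × Fin (n a)) ℂ (MB d n) :=
  Pi.basis fun a => Matrix.stdBasis ℂ (Fin (n a)) (Fin (n a))

lemma bMB_apply (σ : Σ a : Fin d, Fin (n a) × Fin (n a)) :
    bMB d n σ = EB σ.1 σ.2.1 σ.2.2 := by
  obtain ⟨a, p, q⟩ := σ
  rw [bMB, Pi.basis_apply, EB, Matrix.stdBasis_eq_single]

lemma psi_EE (c : ∀ a, Fin (n a) → ℝ) (ρ : MB d n)
    (hρ : ∀ a, ρ a = Matrix.diagonal (fun k => ((c a k : ℝ) : ℂ)))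
    (a : Fin d) (p q : Fin (n a)) (σ : Σ a : Fin d, Fin (n a) × Fin (n a)) :
    psiL ρ (star (EB a p q : MB d n) * EB σ.1 σ.2.1 σ.2.2) =
      if σ = ⟨a, (p, q)⟩ then (c a q : ℂ) else 0 := by
  obtain ⟨a₁, k, l⟩ := σ
  rw [psi_star_E c ρ hρ]
  rcases eq_or_ne a₁ a with rfl | h
  · simp only [EB, Pi.single_eq_same]
    by_cases hk : p = k ∧ q = l
    · obtain ⟨rfl, rfl⟩ := hk
      simp [Matrix.single_apply_same]
    · rw [Matrix.single_apply_of_ne p q 1 k l hk]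
      have : (⟨a₁, (k, l)⟩ : Σ a : Fin d, Fin (n a) × Fin (n a)) ≠ ⟨a₁, (p, q)⟩ := by
        simp only [ne_eq, Sigma.mk.inj_iff, heq_eq_eq, Prod.mk.injEq, true_and]
        rintro ⟨rfl, rfl⟩
        exact hk ⟨rfl, rfl⟩
      simp [this]
  · have : (⟨a₁, (k, l)⟩ : Σ a : Fin d, Fin (n a) × Fin (n a)) ≠ ⟨a, (p, q)⟩ := by
      simp only [ne_eq, Sigma.mk.inj_iff]
      rintro ⟨rfl, -⟩
      exact h rfl
    simp [EB, Pi.single_eq_of_ne h, this]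

end Aux3

section Aux4
variable {d : ℕ} {n : Fin d → ℕ}

lemma pair_nondeg (c : ∀ a, Fin (n a) → ℝ) (hc : ∀ a k, 0 < c a k) (ρ : MB d n)
    (hρ : ∀ a, ρ a = Matrix.diagonal (fun k => ((c a k : ℝ) : ℂ)))
    (t : MB d n ⊗[ℂ] MB d n)
    (h : ∀ x y, pairL ρ x y t = 0) : t = 0 := by
  set bT := (bMB d n).tensorProduct (bMB d n) with hbT
  rw [← LinearEquiv.map_eq_zero_iff bT.repr]
  ext idx
  obtain ⟨⟨a, p, q⟩, ⟨a', r, s⟩⟩ := idx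
  have ht : t = ∑ σσ' : (Σ a : Fin d, Fin (n a) × Fin (n a)) ×
      (Σ a : Fin d, Fin (n a) × Fin (n a)), bT.repr t σσ' • bT σσ' :=
    (Module.Basis.sum_repr bT t).symm
  have hb : ∀ σσ' : (Σ a : Fin d, Fin (n a) × Fin (n a)) ×
      (Σ a : Fin d, Fin (n a) × Fin (n a)),
      pairL ρ (EB a p q) (EB a' r s) (bT σσ') =
        if σσ' = (⟨a, (p, q)⟩, ⟨a', (r, s)⟩) then (c a q : ℂ) * (c a' s : ℂ) else 0 := by
    rintro ⟨σ, σ'⟩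
    rw [hbT, Module.Basis.tensorProduct_apply, bMB_apply, bMB_apply, pairL_tmul,
      psi_EE c ρ hρ, psi_EE c ρ hρ]
    simp only [Prod.mk.injEq]
    by_cases h1 : σ = ⟨a, (p, q)⟩ <;> by_cases h2 : σ' = ⟨a', (r, s)⟩ <;>
      simp [h1, h2]
  have key := h (EB a p q) (EB a' r s)
  rw [ht, map_sum] at key
  simp only [_root_.map_smul, smul_eq_mul, hb, mul_ite, mul_zero] at key
  rw [Finset.sum_ite_eq' Finset.univ] at key
  simp only [Finset.mem_univ, if_true] at key
  have hne : (c a q : ℂ) * (c a' s : ℂ) ≠ 0 :=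
    mul_ne_zero (Complex.ofReal_ne_zero.2 (ne_of_gt (hc a q)))
      (Complex.ofReal_ne_zero.2 (ne_of_gt (hc a' s)))
  have := (mul_eq_zero.1 key).resolve_right hne
  simpa using this

end Aux4

section Aux5
variable {d : ℕ} {n : Fin d → ℕ}

lemma mstar_fB (c : ∀ a, Fin (n a) → ℝ) (hc : ∀ a k, 0 < c a k) (ρ : MB d n)
    (hρ : ∀ a, ρ a = Matrix.diagonal (fun k => ((c a k : ℝ) : ℂ)))
    (mstar : MB d n →ₗ[ℂ] MB d n ⊗[ℂ] MB d n)
    (hmstar : ∀ x y z : MB d n,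
      psiL ρ (star (x * y) * z) = pairL ρ x y (mstar z))
    (b : Fin d) (i j : Fin (n b)) :
    mstar (fB c b i j) = ∑ k, fB c b i k ⊗ₜ[ℂ] fB c b k j := by
  rw [← sub_eq_zero]
  apply pair_nondeg c hc ρ hρ
  intro x y
  rw [map_sub, map_sum, ← hmstar x y]
  simp only [pairL_tmul]
  rw [pair_identity c hc ρ hρ x y b i j, sub_self]

lemma star_stdBasisMatrix {m : ℕ} (i j : Fin m) :
    star (single i j (1 : ℂ)) = single j i 1 := by
  rw [Matrix.star_eq_conjTranspose]
  ext k l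
  simp [Matrix.conjTranspose_apply, Matrix.single, and_comm, apply_ite (starRingEnd ℂ)]

lemma star_fB (c : ∀ a, Fin (n a) → ℝ) (b : Fin d) (i j : Fin (n b)) :
    star (fB c b i j) = fB c b j i := by
  rw [fB, fB, ← Pi.single_star, star_smul, star_stdBasisMatrix,
    Complex.star_def, Complex.conj_ofReal, mul_comm]

end Aux5


/-- let `(B, A, ψ)` be a quantum graph with `B = ⊕_a M_{n_a}` and
`ψ = ⊕_a Tr(ρ_a ·)` a `δ`-form with each `ρ_a` diagonal.  Writing
`A(f_{ij}^b) = ⊕_a X_{ij}^{ab}`, the matrix `(1/δ²) X^{ab} = [(1/δ²) X_{ij}^{ab}]_{ij}` is a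
self-adjoint idempotent in `M_{n_b}(B)`: namely `X_{ij}^{ab} = (X_{ji}^{ab})*` and
`δ² X_{ij}^{ab} = Σ_k X_{ik}^{ab} X_{kj}^{ab}`. -/
theorem stmt4 {d : ℕ} {n : Fin d → ℕ} (c : ∀ a, Fin (n a) → ℝ)
    (hc : ∀ a k, 0 < c a k)
    (ρ : MB d n) (hρ : ∀ a, ρ a = Matrix.diagonal (fun k => (c a k : ℂ)))
    (δ : ℝ) (hδ : 0 < δ)
    (mstar : MB d n →ₗ[ℂ] MB d n ⊗[ℂ] MB d n)
    (hmstar : ∀ x y z : MB d n,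
      psiL ρ (star (x * y) * z) = pairL ρ x y (mstar z))
    (hform : ∀ z : MB d n, LinearMap.mul' ℂ (MB d n) (mstar z) = (δ ^ 2 : ℂ) • z)
    (A : MB d n →ₗ[ℂ] MB d n)
    (hAstar : ∀ x, A (star x) = star (A x))
    (hSchur : ∀ z : MB d n,
      LinearMap.mul' ℂ (MB d n) (TensorProduct.map A A (mstar z)) = (δ ^ 2 : ℂ) • A z) :
    ∀ (b : Fin d) (i j : Fin (n b)) (a : Fin d),
      (A (fB c b i j)) a = ((A (fB c b j i)) a)ᴴ ∧
      (δ ^ 2 : ℂ) • (A (fB c b i j)) a =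
        ∑ k, (A (fB c b i k)) a * (A (fB c b k j)) a := by
  intro b i j a
  constructor
  · have h1 := hAstar (fB c b j i)
    rw [star_fB] at h1
    rw [h1, Pi.star_apply, Matrix.star_eq_conjTranspose]
  · have h2 := hSchur (fB c b i j)
    rw [mstar_fB c hc ρ hρ mstar hmstar b i j, map_sum, map_sum] at h2
    simp only [TensorProduct.map_tmul, LinearMap.mul'_apply] at h2
    have h3 := congrFun h2 a
    simpa [Finset.sum_apply] using h3.symm
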